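/- arXiv:1210.6839 — 4 statements merged into one kernel-verified Lean document; each statement's English description precedes it below -/
import Mathlib

section
/- Let g be a probability density on [0,∞) with distribution function G, α > 0, ν > 1 with ν ∫₀^∞ e^{-αy} g(y) dy = 1, and let ν̄ = ν ∫₀^∞ s e^{-αs} g(s) ds denote the mean of the stable-age distribution. Let F_R be the distribution function with density f_R(x) = (∫₀^∞ e^{-αy} g(x+y) dy)/(∫₀^∞ e^{-αy}(1-G(y)) dy). Then ∫₀^∞ F_R(z) e^{-αz} dz = ν̄/(ν-1). -/
open MeasureTheory Set
open scoped ENNReal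

lemma lswap_tri (F : ℝ → ℝ → ℝ) (hF : Measurable (Function.uncurry F)) :
    (∫⁻ y in Ioi (0:ℝ), ∫⁻ s in Ioi y, ENNReal.ofReal (F y s)) =
      ∫⁻ s in Ioi (0:ℝ), ∫⁻ y in Ioo 0 s, ENNReal.ofReal (F y s) := by
  set ψ : ℝ → ℝ → ℝ≥0∞ := fun y s => if y < s then ENNReal.ofReal (F y s) else 0 with hψ
  have hψm : Measurable (Function.uncurry ψ) := by
    apply Measurable.ite (measurableSet_lt measurable_fst measurable_snd)
    · exact ENNReal.measurable_ofReal.comp hF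
    · exact measurable_const
  have hL : ∀ y ∈ Ioi (0:ℝ), (∫⁻ s in Ioi (0:ℝ), ψ y s) = ∫⁻ s in Ioi y, ENNReal.ofReal (F y s) := by
    intro y hy
    have : ψ y = (Ioi y).indicator (fun s => ENNReal.ofReal (F y s)) := by
      funext s
      by_cases h : y < s <;> simp [hψ, h, Set.indicator, mem_Ioi]
    rw [this, lintegral_indicator measurableSet_Ioi, Measure.restrict_restrict measurableSet_Ioi]
    congr 1
    rw [Set.Ioi_inter_Ioi]
    simp [max_eq_left (le_of_lt (mem_Ioi.mp hy))]
  have hR : ∀ s : ℝ, (∫⁻ y in Ioi (0:ℝ), ψ y s) = ∫⁻ y in Ioo 0 s, ENNReal.ofReal (F y s) := by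
    intro s
    have : (fun y => ψ y s) = (Iio s).indicator (fun y => ENNReal.ofReal (F y s)) := by
      funext y
      by_cases h : y < s <;> simp [hψ, h, Set.indicator, mem_Iio]
    rw [this, lintegral_indicator measurableSet_Iio, Measure.restrict_restrict measurableSet_Iio]
    congr 1
    rw [Set.Iio_inter_Ioi]
  calc (∫⁻ y in Ioi (0:ℝ), ∫⁻ s in Ioi y, ENNReal.ofReal (F y s))
      = ∫⁻ y in Ioi (0:ℝ), ∫⁻ s in Ioi (0:ℝ), ψ y s := by
        refine setLIntegral_congr_fun measurableSet_Ioi ?_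
        intro y hy; exact (hL y hy).symm
    _ = ∫⁻ s in Ioi (0:ℝ), ∫⁻ y in Ioi (0:ℝ), ψ y s := lintegral_lintegral_swap hψm.aemeasurable
    _ = ∫⁻ s in Ioi (0:ℝ), ∫⁻ y in Ioo 0 s, ENNReal.ofReal (F y s) := by
        refine setLIntegral_congr_fun measurableSet_Ioi ?_
        intro s _; exact hR s

lemma inner_toReal_Ioi (F : ℝ → ℝ → ℝ) (hF : Measurable (Function.uncurry F))
    (h0 : ∀ y s, 0 ≤ F y s) (y : ℝ) :
    (∫ s in Ioi y, F y s) = (∫⁻ s in Ioi y, ENNReal.ofReal (F y s)).toReal := by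
  rw [integral_eq_lintegral_of_nonneg_ae (Filter.Eventually.of_forall fun s => h0 y s)
    ((hF.comp measurable_prodMk_left).aestronglyMeasurable)]

lemma inner_toReal_Ioo (F : ℝ → ℝ → ℝ) (hF : Measurable (Function.uncurry F))
    (h0 : ∀ y s, 0 ≤ F y s) (s : ℝ) :
    (∫ y in Ioo 0 s, F y s) = (∫⁻ y in Ioo 0 s, ENNReal.ofReal (F y s)).toReal := by
  rw [integral_eq_lintegral_of_nonneg_ae (Filter.Eventually.of_forall fun y => h0 y s)
    ((hF.comp measurable_prodMk_right).aestronglyMeasurable)]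

lemma meas_L (F : ℝ → ℝ → ℝ) (hF : Measurable (Function.uncurry F)) :
    Measurable (fun y => ∫⁻ s in Ioi y, ENNReal.ofReal (F y s)) := by
  have : (fun y => ∫⁻ s in Ioi y, ENNReal.ofReal (F y s)) =
      fun y => ∫⁻ s, (Ioi y).indicator (fun s => ENNReal.ofReal (F y s)) s := by
    funext y; rw [lintegral_indicator measurableSet_Ioi]
  rw [this]
  apply Measurable.lintegral_prod_right
    (f := fun y s => (Ioi y).indicator (fun s => ENNReal.ofReal (F y s)) s)
  have : (Function.uncurry fun y s => (Ioi y).indicator (fun s => ENNReal.ofReal (F y s)) s) =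
      fun p : ℝ × ℝ => if p.1 < p.2 then ENNReal.ofReal (F p.1 p.2) else 0 := by
    funext p
    by_cases h : p.1 < p.2 <;> simp [Function.uncurry, Set.indicator, mem_Ioi, h]
  rw [this]
  exact Measurable.ite (measurableSet_lt measurable_fst measurable_snd)
    (ENNReal.measurable_ofReal.comp hF) measurable_const

lemma meas_R (F : ℝ → ℝ → ℝ) (hF : Measurable (Function.uncurry F)) :
    Measurable (fun s => ∫⁻ y in Ioo 0 s, ENNReal.ofReal (F y s)) := by
  have : (fun s => ∫⁻ y in Ioo 0 s, ENNReal.ofReal (F y s)) =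
      fun s => ∫⁻ y, (Ioo 0 s).indicator (fun y => ENNReal.ofReal (F y s)) y := by
    funext s; rw [lintegral_indicator measurableSet_Ioo]
  rw [this]
  apply Measurable.lintegral_prod_left
    (f := fun y s => (Ioo 0 s).indicator (fun y => ENNReal.ofReal (F y s)) y)
  have : (Function.uncurry fun y s => (Ioo 0 s).indicator (fun y => ENNReal.ofReal (F y s)) y) =
      fun p : ℝ × ℝ => if 0 < p.1 ∧ p.1 < p.2 then ENNReal.ofReal (F p.1 p.2) else 0 := by
    funext p
    by_cases h : 0 < p.1 ∧ p.1 < p.2 <;> simp [Function.uncurry, Set.indicator, mem_Ioo, h]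
  rw [this]
  exact Measurable.ite
    ((measurableSet_lt measurable_const measurable_fst).inter
      (measurableSet_lt measurable_fst measurable_snd))
    (ENNReal.measurable_ofReal.comp hF) measurable_const

lemma swap_tri (F : ℝ → ℝ → ℝ) (hF : Measurable (Function.uncurry F))
    (h0 : ∀ y s, 0 ≤ F y s)
    (hfin : (∫⁻ s in Ioi (0:ℝ), ∫⁻ y in Ioo 0 s, ENNReal.ofReal (F y s)) ≠ ⊤) :
    (∫ y in Ioi (0:ℝ), ∫ s in Ioi y, F y s) = ∫ s in Ioi (0:ℝ), ∫ y in Ioo 0 s, F y s := by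
  have hswap := lswap_tri F hF
  have hfinL : (∫⁻ y in Ioi (0:ℝ), ∫⁻ s in Ioi y, ENNReal.ofReal (F y s)) ≠ ⊤ := by
    rw [hswap]; exact hfin
  have h1 : (∫ y in Ioi (0:ℝ), ∫ s in Ioi y, F y s)
      = (∫⁻ y in Ioi (0:ℝ), ∫⁻ s in Ioi y, ENNReal.ofReal (F y s)).toReal := by
    rw [show (fun y => ∫ s in Ioi y, F y s)
        = fun y => (∫⁻ s in Ioi y, ENNReal.ofReal (F y s)).toReal
      from funext fun y => inner_toReal_Ioi F hF h0 y]
    exact integral_toReal ((meas_L F hF).aemeasurable) (ae_lt_top (meas_L F hF) hfinL)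
  have h2 : (∫ s in Ioi (0:ℝ), ∫ y in Ioo 0 s, F y s)
      = (∫⁻ s in Ioi (0:ℝ), ∫⁻ y in Ioo 0 s, ENNReal.ofReal (F y s)).toReal := by
    rw [show (fun s => ∫ y in Ioo 0 s, F y s)
        = fun s => (∫⁻ y in Ioo 0 s, ENNReal.ofReal (F y s)).toReal
      from funext fun s => inner_toReal_Ioo F hF h0 s]
    exact integral_toReal ((meas_R F hF).aemeasurable) (ae_lt_top (meas_R F hF) hfin)
  rw [h1, h2, hswap]

lemma aux_le (β z : ℝ) (hβ : 0 < β) (hz : 0 ≤ z) : z * Real.exp (-(β*z)) ≤ 1/β := by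
  rw [le_div_iff₀ hβ]
  have h2 := Real.add_one_le_exp (β*z)
  have h3 : Real.exp (-(β*z)) * Real.exp (β*z) = 1 := by rw [← Real.exp_add]; simp
  nlinarith [mul_le_mul_of_nonneg_left h2 (Real.exp_pos (-(β*z))).le, Real.exp_pos (-(β*z))]

/-- With `g, G, α, ν` as before, `ν̄` the mean of the stable-age distribution and `F_R` the
residual-lifetime distribution function, `∫₀^∞ F_R(z) e^{-αz} dz = ν̄/(ν-1)`. -/
theorem integral_FR_exp (g : ℝ → ℝ) (hg_meas : Measurable g)
    (hg_nonneg : ∀ y, 0 ≤ g y) (hg_supp : ∀ y < (0:ℝ), g y = 0)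
    (hg_prob : ∫ y in Set.Ioi (0:ℝ), g y = 1)
    (G : ℝ → ℝ) (hG : ∀ x, G x = ∫ y in Set.Ioc (0:ℝ) x, g y)
    (α ν : ℝ) (hα : 0 < α) (hν : 1 < ν)
    (hMal : ν * ∫ y in Set.Ioi (0:ℝ), Real.exp (-(α * y)) * g y = 1)
    (nubar : ℝ)
    (hnubar : nubar = ν * ∫ s in Set.Ioi (0:ℝ), s * Real.exp (-(α * s)) * g s)
    (fR : ℝ → ℝ)
    (hfR : ∀ x, fR x = (∫ y in Set.Ioi (0:ℝ), Real.exp (-(α * y)) * g (x + y)) /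
        (∫ y in Set.Ioi (0:ℝ), Real.exp (-(α * y)) * (1 - G y)))
    (FR : ℝ → ℝ) (hFR : ∀ x, FR x = ∫ u in (0:ℝ)..x, fR u) :
    ∫ z in Set.Ioi (0:ℝ), FR z * Real.exp (-(α * z)) = nubar / (ν - 1) := by
  have hν0 : (0:ℝ) < ν := lt_trans one_pos hν
  have hνne : ν ≠ 0 := ne_of_gt hν0
  have hν1 : ν - 1 ≠ 0 := ne_of_gt (by linarith)
  have hm2 : Measurable fun z : ℝ => Real.exp (-(α * z)) :=
    Real.measurable_exp.comp (measurable_id.const_mul α).neg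
  set k : ℝ → ℝ := fun s => Real.exp (-(α * s)) * g s with hk
  have hk_meas : Measurable k :=
    (Real.measurable_exp.comp (measurable_id.const_mul α).neg).mul hg_meas
  have hk_nonneg : ∀ s, 0 ≤ k s := fun s => mul_nonneg (Real.exp_pos _).le (hg_nonneg s)
  have hg_int : IntegrableOn g (Set.Ioi (0:ℝ)) := by
    by_contra h
    rw [MeasureTheory.integral_undef h] at hg_prob
    exact one_ne_zero hg_prob.symm
  have hgIci : IntegrableOn g (Set.Ici (0:ℝ)) := by
    rwa [integrableOn_Ici_iff_integrableOn_Ioi]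
  have hk_full : Integrable k := by
    have h1 : IntegrableOn k (Set.Iio (0:ℝ)) := by
      have : EqOn k (fun _ => (0:ℝ)) (Set.Iio 0) := by
        intro s hs; simp [hk, hg_supp s hs]
      exact (integrableOn_congr_fun this measurableSet_Iio).mpr (integrableOn_zero)
    have h2 : IntegrableOn k (Set.Ici (0:ℝ)) := by
      apply Integrable.mono hgIci hk_meas.aestronglyMeasurable
      filter_upwards [ae_restrict_mem measurableSet_Ici] with s hs
      rw [Real.norm_eq_abs, Real.norm_eq_abs, abs_of_nonneg (hk_nonneg s),
        abs_of_nonneg (hg_nonneg s)]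
      have : Real.exp (-(α * s)) ≤ 1 := by
        rw [Real.exp_le_one_iff]
        have : (0:ℝ) ≤ α * s := mul_nonneg hα.le hs
        linarith
      calc k s = Real.exp (-(α * s)) * g s := rfl
        _ ≤ 1 * g s := mul_le_mul_of_nonneg_right this (hg_nonneg s)
        _ = g s := one_mul _
    have := h1.union h2
    rwa [Set.Iio_union_Ici, integrableOn_univ] at this
  have hk_int : IntegrableOn k (Set.Ioi (0:ℝ)) := hk_full.integrableOn
  set H : ℝ → ℝ := fun x => ∫ s in Set.Ioi x, k s with hH
  have hH_nonneg : ∀ x, 0 ≤ H x := fun x =>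
    setIntegral_nonneg measurableSet_Ioi fun s _ => hk_nonneg s
  have hH_anti : Antitone H := by
    intro a b hab
    exact setIntegral_mono_set hk_full.integrableOn
      (Filter.Eventually.of_forall fun s => hk_nonneg s)
      (HasSubset.Subset.eventuallyLE (Set.Ioi_subset_Ioi hab))
  have hH_meas : Measurable H := hH_anti.measurable
  have hH_le : ∀ u : ℝ, 0 ≤ u → H u ≤ Real.exp (-(α * u)) := by
    intro u hu
    have h1 : H u ≤ ∫ s in Set.Ioi u, Real.exp (-(α * u)) * g s := by
      apply setIntegral_mono_on hk_full.integrableOn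
        ((hg_int.mono_set (Set.Ioi_subset_Ioi hu)).const_mul _) measurableSet_Ioi
      intro s hs
      have hus : u < s := hs
      apply mul_le_mul_of_nonneg_right _ (hg_nonneg s)
      apply Real.exp_le_exp.2
      nlinarith
    have h2 : (∫ s in Set.Ioi u, g s) ≤ 1 := by
      rw [← hg_prob]
      exact setIntegral_mono_set hg_int
        (Filter.Eventually.of_forall fun s => hg_nonneg s)
        (HasSubset.Subset.eventuallyLE (Set.Ioi_subset_Ioi hu))
    calc H u ≤ ∫ s in Set.Ioi u, Real.exp (-(α * u)) * g s := h1
      _ = Real.exp (-(α * u)) * ∫ s in Set.Ioi u, g s := by rw [integral_const_mul]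
      _ ≤ Real.exp (-(α * u)) * 1 :=
          mul_le_mul_of_nonneg_left h2 (Real.exp_pos _).le
      _ = Real.exp (-(α * u)) := mul_one _
  have hexp_int : ∀ u : ℝ, IntegrableOn (fun z => Real.exp (-(α * z))) (Set.Ioi u) := by
    intro u
    have := exp_neg_integrableOn_Ioi u hα
    simpa [neg_mul] using this
  have hE : ∀ u : ℝ, (∫ z in Set.Ioi u, Real.exp (-(α * z))) = Real.exp (-(α * u)) / α := by
    intro u
    have h := integral_comp_mul_left_Ioi (fun x => Real.exp (-x)) u hα
    rw [integral_exp_neg_Ioi] at h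
    rw [h, smul_eq_mul, inv_mul_eq_div]
  have hE0 : (∫ z in Set.Ioi (0:ℝ), Real.exp (-(α * z))) = 1 / α := by
    rw [hE 0, mul_zero, neg_zero, Real.exp_zero]
  -- integrability of s * k s
  have hsk_int : IntegrableOn (fun s => s * k s) (Set.Ioi 0) := by
    have hm1 : Measurable fun s : ℝ => s * k s := measurable_id.mul hk_meas
    apply Integrable.mono (hg_int.const_mul (1/α)) hm1.aestronglyMeasurable
    filter_upwards [ae_restrict_mem measurableSet_Ioi] with s hs
    have hs0 : (0:ℝ) < s := hs
    rw [Real.norm_eq_abs, Real.norm_eq_abs,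
      abs_of_nonneg (mul_nonneg hs0.le (hk_nonneg s)),
      abs_of_nonneg (mul_nonneg (by positivity) (hg_nonneg s))]
    calc s * k s = (s * Real.exp (-(α * s))) * g s := by rw [hk]; ring
      _ ≤ (1/α) * g s :=
        mul_le_mul_of_nonneg_right (aux_le α s hα hs0.le) (hg_nonneg s)
  -- Fubini app 1
  have hfin1 : (∫⁻ s in Set.Ioi (0:ℝ), ∫⁻ y in Set.Ioo 0 s,
      ENNReal.ofReal ((fun (_ : ℝ) s => k s) y s)) ≠ ⊤ := by
    have heq : ∀ s ∈ Set.Ioi (0:ℝ), (∫⁻ _ in Set.Ioo (0:ℝ) s, ENNReal.ofReal (k s))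
        = ENNReal.ofReal (s * k s) := by
      intro s hs
      have hs0 : (0:ℝ) < s := hs
      rw [setLIntegral_const, Real.volume_Ioo, sub_zero,
        ENNReal.ofReal_mul hs0.le]
      exact mul_comm _ _
    rw [setLIntegral_congr_fun measurableSet_Ioi heq]
    rw [← ofReal_integral_eq_lintegral_ofReal hsk_int
      (Filter.Eventually.of_forall fun s => by
        by_cases h : 0 ≤ s
        · exact mul_nonneg h (hk_nonneg s)
        · push_neg at h
          simp [hk, hg_supp s h])]
    exact ENNReal.ofReal_ne_top
  have A1 : (∫ u in Set.Ioi (0:ℝ), H u) = ∫ s in Set.Ioi (0:ℝ), s * k s := by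
    have hsw := swap_tri (fun _ s => k s) (hk_meas.comp measurable_snd)
      (fun _ s => hk_nonneg s) hfin1
    rw [hH]
    rw [hsw]
    apply setIntegral_congr_fun measurableSet_Ioi
    intro s hs
    have hs0 : (0:ℝ) < s := hs
    show (∫ _ in Set.Ioo (0:ℝ) s, k s) = s * k s
    rw [setIntegral_const, Real.volume_real_Ioo_of_le hs0.le, sub_zero,
      smul_eq_mul]
  -- the denominator D
  have hGres : ∀ y ∈ Set.Ioi (0:ℝ), 1 - G y = ∫ s in Set.Ioi y, g s := by
    intro y hy
    have hy0 : (0:ℝ) < y := hy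
    have hsum := MeasureTheory.setIntegral_union (Set.Ioc_disjoint_Ioi le_rfl)
      measurableSet_Ioi (f := g) (hg_int.mono_set Set.Ioc_subset_Ioi_self)
      (hg_int.mono_set (Set.Ioi_subset_Ioi hy0.le))
    rw [Set.Ioc_union_Ioi_eq_Ioi hy0.le, hg_prob] at hsum
    rw [hG y]
    linarith
  set D : ℝ := ∫ y in Set.Ioi (0:ℝ), Real.exp (-(α * y)) * (1 - G y) with hDdef
  have hD1 : D = ∫ y in Set.Ioi (0:ℝ), ∫ s in Set.Ioi y, Real.exp (-(α * y)) * g s := by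
    rw [hDdef]
    apply setIntegral_congr_fun measurableSet_Ioi
    intro y hy
    show Real.exp (-(α * y)) * (1 - G y) = ∫ s in Set.Ioi y, Real.exp (-(α * y)) * g s
    rw [hGres y hy]
    exact (integral_const_mul _ _).symm
  have hfin2 : (∫⁻ s in Set.Ioi (0:ℝ), ∫⁻ y in Set.Ioo 0 s,
      ENNReal.ofReal ((fun y s => Real.exp (-(α * y)) * g s) y s)) ≠ ⊤ := by
    have hb : ∀ s : ℝ, (∫⁻ y in Set.Ioo (0:ℝ) s, ENNReal.ofReal (Real.exp (-(α * y)) * g s))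
        ≤ ENNReal.ofReal (1/α) * ENNReal.ofReal (g s) := by
      intro s
      calc (∫⁻ y in Set.Ioo (0:ℝ) s, ENNReal.ofReal (Real.exp (-(α * y)) * g s))
          ≤ ∫⁻ y in Set.Ioi (0:ℝ), ENNReal.ofReal (Real.exp (-(α * y)) * g s) :=
            lintegral_mono_set Set.Ioo_subset_Ioi_self
        _ = ∫⁻ y in Set.Ioi (0:ℝ),
              ENNReal.ofReal (Real.exp (-(α * y))) * ENNReal.ofReal (g s) := by
            apply lintegral_congr
            intro y
            rw [ENNReal.ofReal_mul (Real.exp_pos _).le]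
        _ = (∫⁻ y in Set.Ioi (0:ℝ), ENNReal.ofReal (Real.exp (-(α * y))))
              * ENNReal.ofReal (g s) :=
            lintegral_mul_const _ hm2.ennreal_ofReal
        _ = ENNReal.ofReal (1/α) * ENNReal.ofReal (g s) := by
            rw [← ofReal_integral_eq_lintegral_ofReal (hexp_int 0)
              (Filter.Eventually.of_forall fun y => (Real.exp_pos _).le), hE0]
    have hlim : (∫⁻ s in Set.Ioi (0:ℝ),
        ENNReal.ofReal (1/α) * ENNReal.ofReal (g s)) ≠ ⊤ := by
      rw [lintegral_const_mul _ hg_meas.ennreal_ofReal]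
      rw [← ofReal_integral_eq_lintegral_ofReal hg_int
        (Filter.Eventually.of_forall fun s => hg_nonneg s), hg_prob]
      exact ENNReal.mul_ne_top ENNReal.ofReal_ne_top ENNReal.ofReal_ne_top
    exact ne_top_of_le_ne_top hlim (lintegral_mono fun s => hb s)
  have hD : D = (1 - ∫ y in Set.Ioi (0:ℝ), k y) / α := by
    rw [hD1, swap_tri (fun y s => Real.exp (-(α * y)) * g s)
      (((Real.measurable_exp.comp (measurable_id.const_mul α).neg).comp measurable_fst).mul
        (hg_meas.comp measurable_snd))
      (fun y s => mul_nonneg (Real.exp_pos _).le (hg_nonneg s)) hfin2]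
    have hinner : ∀ s ∈ Set.Ioi (0:ℝ),
        (∫ y in Set.Ioo (0:ℝ) s, Real.exp (-(α * y)) * g s)
          = (1/α) * g s - (1/α) * k s := by
      intro s hs
      show (∫ y in Set.Ioo (0:ℝ) s, Real.exp (-(α * y)) * g s) = 1/α * g s - 1/α * k s
      have hs0 : (0:ℝ) < s := hs
      have hsplit := MeasureTheory.setIntegral_union (Set.Ioc_disjoint_Ioi le_rfl)
        measurableSet_Ioi (f := fun y => Real.exp (-(α * y)))
        ((hexp_int 0).mono_set Set.Ioc_subset_Ioi_self) (hexp_int s)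
      rw [Set.Ioc_union_Ioi_eq_Ioi hs0.le, hE0, hE s] at hsplit
      have hIoo : (∫ y in Set.Ioo (0:ℝ) s, Real.exp (-(α * y)))
          = 1/α - Real.exp (-(α * s))/α := by
        rw [← integral_Ioc_eq_integral_Ioo]
        linarith
      rw [integral_mul_const, hIoo, hk]
      ring
    rw [setIntegral_congr_fun measurableSet_Ioi hinner,
      integral_sub (hg_int.const_mul _) (hk_int.const_mul _),
      integral_const_mul, integral_const_mul, hg_prob]
    ring
  -- translation step
  have hN : ∀ x : ℝ, 0 < x →
      (∫ y in Set.Ioi (0:ℝ), Real.exp (-(α * y)) * g (x + y))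
        = Real.exp (α * x) * H x := by
    intro x hx
    have h1 : ∀ y : ℝ, Real.exp (-(α * y)) * g (x + y)
        = Real.exp (α * x) * k (x + y) := by
      intro y
      rw [hk]
      rw [← mul_assoc, ← Real.exp_add]
      congr 2
      ring
    simp_rw [h1]
    rw [integral_const_mul]
    congr 1
    have h2 : ∀ y : ℝ, (Set.Ioi (0:ℝ)).indicator (fun y => k (x + y)) y
        = (Set.Ioi x).indicator k (x + y) := by
      intro y
      by_cases h : (0:ℝ) < y
      · rw [Set.indicator_of_mem (Set.mem_Ioi.2 h),
          Set.indicator_of_mem (Set.mem_Ioi.2 (by linarith))]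
      · rw [Set.indicator_of_notMem (by simpa using h),
          Set.indicator_of_notMem (by simp [Set.mem_Ioi]; linarith)]
    rw [hH]
    rw [← integral_indicator measurableSet_Ioi]
    simp_rw [h2]
    rw [integral_add_left_eq_self ((Set.Ioi x).indicator k) x]
    rw [integral_indicator measurableSet_Ioi]
  have hfR' : ∀ u : ℝ, 0 < u → fR u = Real.exp (α * u) * H u / D := by
    intro u hu
    rw [hfR u, hN u hu]
  have hFR' : ∀ z : ℝ, 0 < z →
      FR z = ∫ u in Set.Ioo (0:ℝ) z, Real.exp (α * u) * H u / D := by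
    intro z hz
    rw [hFR z, intervalIntegral.integral_of_le hz.le, integral_Ioc_eq_integral_Ioo]
    exact setIntegral_congr_fun measurableSet_Ioo fun u hu => hfR' u hu.1
  -- Fubini app 3
  set F3 : ℝ → ℝ → ℝ := fun u z => Real.exp (α * u) * H u * Real.exp (-(α * z)) with hF3
  have hF3_meas : Measurable (Function.uncurry F3) :=
    (((Real.measurable_exp.comp (measurable_id.const_mul α)).mul hH_meas).comp
      measurable_fst).mul
      ((Real.measurable_exp.comp (measurable_id.const_mul α).neg).comp measurable_snd)
  have hF3_nonneg : ∀ u z, 0 ≤ F3 u z := fun u z =>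
    mul_nonneg (mul_nonneg (Real.exp_pos _).le (hH_nonneg u)) (Real.exp_pos _).le
  have hze_int : IntegrableOn (fun z => z * Real.exp (-(α * z))) (Set.Ioi 0) := by
    have hm3 : Measurable fun z : ℝ => z * Real.exp (-(α * z)) := measurable_id.mul hm2
    apply Integrable.mono ((exp_neg_integrableOn_Ioi 0 (half_pos hα)).const_mul (2/α))
      hm3.aestronglyMeasurable
    filter_upwards [ae_restrict_mem measurableSet_Ioi] with z hz
    have hz0 : (0:ℝ) < z := hz
    rw [Real.norm_eq_abs, Real.norm_eq_abs,
      abs_of_nonneg (mul_nonneg hz0.le (Real.exp_pos _).le),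
      abs_of_nonneg (by positivity)]
    have key : z * Real.exp (-(α/2 * z)) ≤ 2/α := by
      have h := aux_le (α/2) z (half_pos hα) hz0.le
      have : (1:ℝ)/(α/2) = 2/α := by
        field_simp
      rwa [this] at h
    calc z * Real.exp (-(α * z))
        = (z * Real.exp (-(α/2 * z))) * Real.exp (-(α/2 * z)) := by
          rw [mul_assoc, ← Real.exp_add]
          congr 2
          ring
      _ ≤ (2/α) * Real.exp (-(α/2 * z)) :=
          mul_le_mul_of_nonneg_right key (Real.exp_pos _).le
      _ = (2/α) * Real.exp (-(α/2) * z) := by rw [neg_mul]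
  have hfin3 : (∫⁻ z in Set.Ioi (0:ℝ), ∫⁻ u in Set.Ioo 0 z,
      ENNReal.ofReal (F3 u z)) ≠ ⊤ := by
    have hb : ∀ z ∈ Set.Ioi (0:ℝ), (∫⁻ u in Set.Ioo (0:ℝ) z, ENNReal.ofReal (F3 u z))
        ≤ ENNReal.ofReal (z * Real.exp (-(α * z))) := by
      intro z hz
      have hz0 : (0:ℝ) < z := hz
      have h1 : ∀ u ∈ Set.Ioo (0:ℝ) z,
          ENNReal.ofReal (F3 u z) ≤ ENNReal.ofReal (Real.exp (-(α * z))) := by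
        intro u hu
        apply ENNReal.ofReal_le_ofReal
        have hHu := hH_le u hu.1.le
        have hmul := mul_le_mul_of_nonneg_left hHu (Real.exp_pos (α * u)).le
        rw [← Real.exp_add] at hmul
        simp only [add_neg_cancel, Real.exp_zero] at hmul
        calc F3 u z = (Real.exp (α * u) * H u) * Real.exp (-(α * z)) := rfl
          _ ≤ 1 * Real.exp (-(α * z)) :=
              mul_le_mul_of_nonneg_right hmul (Real.exp_pos _).le
          _ = Real.exp (-(α * z)) := one_mul _
      calc (∫⁻ u in Set.Ioo (0:ℝ) z, ENNReal.ofReal (F3 u z))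
          ≤ ∫⁻ _ in Set.Ioo (0:ℝ) z, ENNReal.ofReal (Real.exp (-(α * z))) :=
            setLIntegral_mono' measurableSet_Ioo h1
        _ = ENNReal.ofReal (Real.exp (-(α * z))) * volume (Set.Ioo (0:ℝ) z) :=
            setLIntegral_const _ _
        _ = ENNReal.ofReal (z * Real.exp (-(α * z))) := by
            rw [Real.volume_Ioo, sub_zero, ← ENNReal.ofReal_mul (Real.exp_pos _).le,
              mul_comm]
    have hlim : (∫⁻ z in Set.Ioi (0:ℝ),
        ENNReal.ofReal (z * Real.exp (-(α * z)))) ≠ ⊤ := by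
      rw [← ofReal_integral_eq_lintegral_ofReal hze_int
        ((ae_restrict_mem measurableSet_Ioi).mono fun z hz =>
          mul_nonneg (le_of_lt hz) (Real.exp_pos _).le)]
      exact ENNReal.ofReal_ne_top
    exact ne_top_of_le_ne_top hlim (setLIntegral_mono' measurableSet_Ioi hb)
  -- main computation
  have hT : (∫ z in Set.Ioi (0:ℝ), FR z * Real.exp (-(α * z)))
      = (∫ z in Set.Ioi (0:ℝ), ∫ u in Set.Ioo 0 z, F3 u z) / D := by
    rw [← integral_div]
    apply setIntegral_congr_fun measurableSet_Ioi
    intro z hz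
    have hz0 : (0:ℝ) < z := hz
    show FR z * Real.exp (-(α * z)) = (∫ u in Set.Ioo 0 z, F3 u z) / D
    rw [hFR' z hz0]
    rw [integral_div, div_mul_eq_mul_div]
    congr 1
    exact (integral_mul_const _ _).symm
  have hswap3 : (∫ z in Set.Ioi (0:ℝ), ∫ u in Set.Ioo 0 z, F3 u z)
      = ∫ u in Set.Ioi (0:ℝ), ∫ z in Set.Ioi u, F3 u z :=
    (swap_tri F3 hF3_meas hF3_nonneg hfin3).symm
  have hinner3 : ∀ u ∈ Set.Ioi (0:ℝ),
      (∫ z in Set.Ioi u, F3 u z) = (1/α) * H u := by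
    intro u _
    have e1 : (∫ z in Set.Ioi u, F3 u z)
        = (Real.exp (α * u) * H u) * ∫ z in Set.Ioi u, Real.exp (-(α * z)) := by
      simp only [hF3]
      rw [integral_const_mul]
    rw [e1, hE u]
    have hh : Real.exp (α * u) * Real.exp (-(α * u)) = 1 := by
      rw [← Real.exp_add]; simp
    have : Real.exp (α * u) * H u * (Real.exp (-(α * u)) / α)
        = (Real.exp (α * u) * Real.exp (-(α * u))) * (H u / α) := by ring
    rw [this, hh]
    ring
  have hM : (∫ s in Set.Ioi (0:ℝ), s * k s) = nubar / ν := by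
    have e2 : (∫ s in Set.Ioi (0:ℝ), s * Real.exp (-(α * s)) * g s)
        = ∫ s in Set.Ioi (0:ℝ), s * k s := by
      apply setIntegral_congr_fun measurableSet_Ioi
      intro s _
      simp only [hk]
      ring
    rw [hnubar, e2, mul_comm, mul_div_assoc, div_self hνne, mul_one]
  have hI : (∫ y in Set.Ioi (0:ℝ), k y) = 1/ν := by
    rw [eq_div_iff hνne]
    linarith [hMal]
  have hfinal : (∫ u in Set.Ioi (0:ℝ), ∫ z in Set.Ioi u, F3 u z)
      = (1/α) * ∫ u in Set.Ioi (0:ℝ), H u := by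
    rw [← integral_const_mul]
    apply setIntegral_congr_fun measurableSet_Ioi
    intro u hu
    show (∫ z in Set.Ioi u, F3 u z) = 1/α * H u
    exact hinner3 u hu
  rw [hT, hswap3, hfinal, A1, hM, hD, hI]
  field_simp
end

section
/- Let X be a nonnegative integer-valued random variable with E[X log(X)_+] < ∞, let η ∈ (0,1), K ≥ 1, and set m_i = K η^{-i}. With ν = E[X] and ν^(i) = E[X·1{X ≤ m_i}], the infinite product satisfies 1 - ∏_{i=1}^∞ (ν^(i)/ν) ≤ (log(1/η))^{-1} E[X log(X/K)_+], provided ν > 1. -/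
open MeasureTheory

lemma aux_one_sub_sum_le_prod (a : ℕ → ℝ) (h0 : ∀ i, 0 ≤ a i) (h1 : ∀ i, a i ≤ 1)
    (F : Finset ℕ) : 1 - ∑ i ∈ F, (1 - a i) ≤ ∏ i ∈ F, a i := by
  classical
  refine Finset.induction_on F (by simp) ?_
  intro j F hj ih
  rw [Finset.sum_insert hj, Finset.prod_insert hj]
  have hP0 : 0 ≤ ∏ i ∈ F, a i := Finset.prod_nonneg fun i _ => h0 i
  have hS0 : 0 ≤ ∑ i ∈ F, (1 - a i) := Finset.sum_nonneg fun i _ => by linarith [h1 i]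
  nlinarith [h0 j, h1 j, ih]

/-- Effect of truncation on the expectation of a CTBP (Lemma: truncation levels
`m_i = K η^{-i}`): if `E[X log(X)_+] < ∞` and `ν = E[X] > 1`, then with
`ν^{(i)} = E[X 1{X ≤ m_i}]`,
`1 - ∏_{i≥1} (ν^{(i)}/ν) ≤ (log(1/η))⁻¹ E[X log(X/K)_+]`. -/
theorem truncation_expectation_bound {Ω : Type*} [MeasurableSpace Ω] (ℙ : Measure Ω)
    [IsProbabilityMeasure ℙ] (X : Ω → ℕ) (hX : Measurable X)
    (η K : ℝ) (hη : η ∈ Set.Ioo (0:ℝ) 1) (hK : 1 ≤ K)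
    (hXlogX : Integrable (fun ω => (X ω : ℝ) * max (Real.log (X ω : ℝ)) 0) ℙ)
    (ν : ℝ) (hν : ν = ∫ ω, (X ω : ℝ) ∂ℙ) (hν1 : 1 < ν)
    (νi : ℕ → ℝ)
    (hνi : ∀ i : ℕ,
      νi i = ∫ ω, (if (X ω : ℝ) ≤ K / η ^ (i + 1) then (X ω : ℝ) else 0) ∂ℙ) :
    1 - (∏' i : ℕ, νi i / ν) ≤
      (Real.log (1 / η))⁻¹ * ∫ ω, (X ω : ℝ) * max (Real.log ((X ω : ℝ) / K)) 0 ∂ℙ := by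
  classical
  obtain ⟨hη0, hη1⟩ := hη
  have hK0 : (0:ℝ) < K := lt_of_lt_of_le one_pos hK
  set L := Real.log (1 / η) with hLdef
  have hL : 0 < L := Real.log_pos (by rw [lt_div_iff₀ hη0]; linarith)
  have hν0 : (0:ℝ) < ν := by linarith
  have hXr : Measurable fun ω => (X ω : ℝ) := by fun_prop
  -- integrability of X
  have hXint : Integrable (fun ω => (X ω : ℝ)) ℙ := by
    refine ((integrable_const (3:ℝ)).add hXlogX).mono' hXr.aestronglyMeasurable
      (ae_of_all _ fun ω => ?_)
    have hx0 : (0:ℝ) ≤ (X ω : ℝ) := Nat.cast_nonneg _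
    rw [Real.norm_eq_abs, abs_of_nonneg hx0]
    simp only [Pi.add_apply]
    rcases le_or_gt ((X ω : ℝ)) 3 with h | h
    · have : (0:ℝ) ≤ (X ω : ℝ) * max (Real.log (X ω : ℝ)) 0 :=
        mul_nonneg hx0 (le_max_right _ _)
      linarith
    · have hexp : Real.exp 1 ≤ (X ω : ℝ) := by
        have := Real.exp_one_lt_d9
        linarith
      have hlog1 : 1 ≤ Real.log (X ω : ℝ) :=
        (Real.le_log_iff_exp_le (by linarith)).2 hexp
      have hmax : max (Real.log (X ω : ℝ)) 0 = Real.log (X ω : ℝ) :=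
        max_eq_left (by linarith)
      rw [hmax]
      nlinarith
  -- truncations are integrable
  have htrunc : ∀ c : ℝ, Integrable (fun ω => if (X ω : ℝ) ≤ c then (X ω : ℝ) else 0) ℙ := by
    intro c
    refine hXint.mono' ((Measurable.ite (measurableSet_le hXr measurable_const) hXr
        measurable_const).aestronglyMeasurable) (ae_of_all _ fun ω => ?_)
    have hx0 : (0:ℝ) ≤ (X ω : ℝ) := Nat.cast_nonneg _
    rw [Real.norm_eq_abs]
    split_ifs with h
    · rw [abs_of_nonneg hx0]
    · simpa using hx0
  have hfint : ∀ c : ℝ, Integrable (fun ω => if c < (X ω : ℝ) then (X ω : ℝ) else 0) ℙ := by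
    intro c
    refine hXint.mono' ((Measurable.ite (measurableSet_lt measurable_const hXr) hXr
        measurable_const).aestronglyMeasurable) (ae_of_all _ fun ω => ?_)
    have hx0 : (0:ℝ) ≤ (X ω : ℝ) := Nat.cast_nonneg _
    rw [Real.norm_eq_abs]
    split_ifs with h
    · rw [abs_of_nonneg hx0]
    · simpa using hx0
  -- ν - νi i equals the integral of the tail part
  have hdiff : ∀ i : ℕ, ν - νi i
      = ∫ ω, (if K / η ^ (i + 1) < (X ω : ℝ) then (X ω : ℝ) else 0) ∂ℙ := by
    intro i
    rw [hν, hνi i, ← integral_sub hXint (htrunc _)]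
    refine integral_congr_ae (ae_of_all _ fun ω => ?_)
    rcases le_or_gt ((X ω : ℝ)) (K / η ^ (i + 1)) with h | h
    · simp [h, not_lt.2 h]
    · simp [not_le.2 h, h]
  have hdiff0 : ∀ i : ℕ, 0 ≤ ν - νi i := by
    intro i
    rw [hdiff i]
    refine integral_nonneg fun ω => ?_
    dsimp only
    split_ifs <;> simp [Nat.cast_nonneg]
  -- the factors are in [0,1]
  have hνi0 : ∀ i, 0 ≤ νi i := by
    intro i
    rw [hνi i]
    refine integral_nonneg fun ω => ?_
    dsimp only
    split_ifs <;> simp [Nat.cast_nonneg]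
  have ha0 : ∀ i, 0 ≤ νi i / ν := fun i => div_nonneg (hνi0 i) hν0.le
  have ha1 : ∀ i, νi i / ν ≤ 1 := fun i => (div_le_one hν0).2 (by linarith [hdiff0 i])
  -- pointwise key bound
  have hpoint : ∀ (F : Finset ℕ) (ω : Ω),
      ∑ i ∈ F, (if K / η ^ (i + 1) < (X ω : ℝ) then (X ω : ℝ) else 0)
        ≤ (X ω : ℝ) * max (Real.log ((X ω : ℝ) / K)) 0 / L := by
    intro F ω
    set x : ℝ := (X ω : ℝ) with hxdef
    have hx0 : (0:ℝ) ≤ x := Nat.cast_nonneg _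
    have hRHS0 : 0 ≤ x * max (Real.log (x / K)) 0 / L :=
      div_nonneg (mul_nonneg hx0 (le_max_right _ _)) hL.le
    rw [← Finset.sum_filter, Finset.sum_const, nsmul_eq_mul]
    set S := F.filter (fun i => K / η ^ (i + 1) < x) with hSdef
    rcases S.eq_empty_or_nonempty with hS | hS
    · simp [hS, hRHS0]
    · -- any i ∈ S satisfies (i+1) * L < log (x/K)
      have hmem : ∀ i ∈ S, ((i:ℝ) + 1) * L < Real.log (x / K) := by
        intro i hi
        have hcond : K / η ^ (i + 1) < x := (Finset.mem_filter.1 hi).2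
        have hp : (0:ℝ) < η ^ (i + 1) := pow_pos hη0 _
        have h1 : 1 / η ^ (i + 1) < x / K := by
          rw [div_lt_div_iff₀ hp hK0]
          calc 1 * K = K := one_mul K
          _ < x * η ^ (i + 1) := (div_lt_iff₀ hp).1 hcond
        have hpos : (0:ℝ) < 1 / η ^ (i + 1) := by positivity
        have hlog := Real.log_lt_log hpos h1
        have heq : Real.log (1 / η ^ (i + 1)) = ((i:ℝ) + 1) * L := by
          rw [hLdef, one_div, one_div, Real.log_inv, Real.log_inv, Real.log_pow]
          push_cast
          ring
        linarith [heq ▸ hlog]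
      obtain ⟨j, hj⟩ := hS
      have hlogpos : 0 < Real.log (x / K) := by
        have := hmem j hj
        nlinarith [hL, (Nat.cast_nonneg j : (0:ℝ) ≤ (j:ℝ))]
      have hmax : max (Real.log (x / K)) 0 = Real.log (x / K) := max_eq_left hlogpos.le
      set t : ℝ := Real.log (x / K) / L with htdef
      have ht0 : 0 ≤ t := div_nonneg hlogpos.le hL.le
      have hsub : S ⊆ Finset.range ⌊t⌋₊ := by
        intro i hi
        have h1 : ((i:ℝ) + 1) < t := by
          rw [htdef, lt_div_iff₀ hL]
          exact hmem i hi
        have h2 : (i + 1 : ℕ) ≤ ⌊t⌋₊ := Nat.le_floor (by push_cast; linarith)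
        exact Finset.mem_range.2 (by omega)
      have hcard : (S.card : ℝ) ≤ t := by
        calc (S.card : ℝ) ≤ ((Finset.range ⌊t⌋₊).card : ℝ) := by
              exact_mod_cast Finset.card_le_card hsub
        _ = (⌊t⌋₊ : ℝ) := by rw [Finset.card_range]
        _ ≤ t := Nat.floor_le ht0
      rw [hmax]
      calc (S.card : ℝ) * x ≤ t * x := by
            exact mul_le_mul_of_nonneg_right hcard hx0
      _ = x * Real.log (x / K) / L := by rw [htdef]; ring
  -- the integrand bound is integrable
  have hgint : Integrable (fun ω => (X ω : ℝ) * max (Real.log ((X ω : ℝ) / K)) 0) ℙ := by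
    refine hXlogX.mono' ((hXr.mul ((Real.measurable_log.comp (hXr.div_const K)).max
        measurable_const)).aestronglyMeasurable) (ae_of_all _ fun ω => ?_)
    have hx0 : (0:ℝ) ≤ (X ω : ℝ) := Nat.cast_nonneg _
    rw [Real.norm_eq_abs, abs_of_nonneg (mul_nonneg hx0 (le_max_right _ _))]
    refine mul_le_mul_of_nonneg_left (max_le_max ?_ le_rfl) hx0
    rcases eq_or_lt_of_le hx0 with h | h
    · simp [← h]
    · exact Real.log_le_log (by positivity) (div_le_self h.le hK)
  set T : ℝ := L⁻¹ * ∫ ω, (X ω : ℝ) * max (Real.log ((X ω : ℝ) / K)) 0 ∂ℙ with hTdef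
  -- finite sum bound
  have hsum : ∀ F : Finset ℕ, ∑ i ∈ F, (1 - νi i / ν) ≤ T := by
    intro F
    have step1 : ∑ i ∈ F, (1 - νi i / ν) ≤ ∑ i ∈ F, (ν - νi i) := by
      refine Finset.sum_le_sum fun i _ => ?_
      have : 1 - νi i / ν = (ν - νi i) / ν := by field_simp
      rw [this]
      exact div_le_self (hdiff0 i) hν1.le
    have step2 : ∑ i ∈ F, (ν - νi i)
        = ∫ ω, ∑ i ∈ F, (if K / η ^ (i + 1) < (X ω : ℝ) then (X ω : ℝ) else 0) ∂ℙ := by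
      rw [integral_finset_sum F (fun i _ => hfint (K / η ^ (i + 1)))]
      exact Finset.sum_congr rfl fun i _ => hdiff i
    have step3 : ∫ ω, ∑ i ∈ F, (if K / η ^ (i + 1) < (X ω : ℝ) then (X ω : ℝ) else 0) ∂ℙ
        ≤ ∫ ω, (X ω : ℝ) * max (Real.log ((X ω : ℝ) / K)) 0 / L ∂ℙ := by
      refine integral_mono (integrable_finset_sum F (fun i _ => hfint _)) (hgint.div_const L)
        fun ω => hpoint F ω
    have step4 : ∫ ω, (X ω : ℝ) * max (Real.log ((X ω : ℝ) / K)) 0 / L ∂ℙ = T := by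
      rw [hTdef, integral_div, div_eq_inv_mul]
    linarith
  -- finite product bound
  have hF : ∀ F : Finset ℕ, 1 - T ≤ ∏ i ∈ F, νi i / ν := by
    intro F
    have := aux_one_sub_sum_le_prod (fun i => νi i / ν) ha0 ha1 F
    have h2 := hsum F
    linarith
  -- the product converges (antitone, bounded below)
  have hanti : Antitone (fun s : Finset ℕ => ∏ i ∈ s, (νi i / ν)) := by
    intro s t hst
    dsimp only
    rw [← Finset.prod_sdiff hst]
    exact mul_le_of_le_one_left (Finset.prod_nonneg fun i _ => ha0 i)
      (Finset.prod_le_one (fun i _ => ha0 i) (fun i _ => ha1 i))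
  have hbdd : BddBelow (Set.range fun s : Finset ℕ => ∏ i ∈ s, (νi i / ν)) := by
    refine ⟨0, ?_⟩
    rintro y ⟨s, rfl⟩
    exact Finset.prod_nonneg fun i _ => ha0 i
  have hprod : HasProd (fun i => νi i / ν)
      (⨅ s : Finset ℕ, ∏ i ∈ s, (νi i / ν)) :=
    tendsto_atTop_ciInf hanti hbdd
  have htp : (∏' i : ℕ, νi i / ν) = ⨅ s : Finset ℕ, ∏ i ∈ s, (νi i / ν) :=
    hprod.tprod_eq
  have hineq : 1 - T ≤ ∏' i : ℕ, νi i / ν := by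
    rw [htp]
    exact le_ciInf fun s => hF s
  linarith
end

section
/- Combining the previous two bounds: for X a nonnegative integer-valued random variable with ν = E[X] < ∞, η ∈ (0,1), K ≥ 1, m_j = Kη^{-j}, setting a_j = η E[(X ∧ m_j)²]/ν and b_j = η E[X ∧ m_j]/ν and assuming ν ≥ 1, the sum Σ_{j=1}^∞ b_1⋯b_{j-1} a_j ≤ 2νK/(1-η). -/
open MeasureTheory

lemma geom_aux {η : ℝ} (h0 : 0 < η) (h1 : η < 1) :
    ∀ (n m : ℕ), ∑ j ∈ Finset.range n, η ^ (m + j) ≤ η ^ m / (1 - η) := by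
  intro n
  induction n with
  | zero =>
    intro m
    rw [Finset.sum_range_zero]
    exact div_nonneg (by positivity) (by linarith)
  | succ n ih =>
    intro m
    rw [Finset.sum_range_succ']
    have h2 : ∑ j ∈ Finset.range n, η ^ (m + (j + 1)) ≤ η ^ (m + 1) / (1 - η) := by
      have := ih (m + 1)
      convert this using 2 with j
      ring
    have h3 : η ^ (m + 1) / (1 - η) + η ^ m = η ^ m / (1 - η) := by
      have : (1 : ℝ) - η ≠ 0 := by linarith
      field_simp
      ring
    simp only [add_zero]
    linarith

lemma geom_inv_aux {η : ℝ} (h0 : 0 < η) (h1 : η < 1) :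
    ∀ n : ℕ, ∑ j ∈ Finset.range n, 1 / η ^ (j + 1) ≤ (1 / η ^ n) / (1 - η) := by
  intro n
  induction n with
  | zero =>
    rw [Finset.sum_range_zero]
    exact div_nonneg (by positivity) (by linarith)
  | succ n ih =>
    rw [Finset.sum_range_succ]
    have h3 : (1 / η ^ n) / (1 - η) + 1 / η ^ (n + 1) = (1 / η ^ (n + 1)) / (1 - η) := by
      have hne : (1 : ℝ) - η ≠ 0 := by linarith
      have hpn : η ^ n ≠ 0 := by positivity
      have hpn1 : η ^ (n + 1) ≠ 0 := by positivity
      field_simp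
      ring
    linarith

lemma pointwise_sum {η K x : ℝ} (h0 : 0 < η) (h1 : η < 1) (hK : 0 < K) (hx : 0 ≤ x) (N : ℕ) :
    ∑ j ∈ Finset.range N, min (η ^ (j + 1) * x ^ 2) (K ^ 2 / η ^ (j + 1)) ≤
      2 * K * x / (1 - η) := by
  have h1η : (0:ℝ) < 1 - η := by linarith
  rcases eq_or_lt_of_le hx with hx0 | hx0
  · have hz : ∀ j ∈ Finset.range N, min (η ^ (j + 1) * x ^ 2) (K ^ 2 / η ^ (j + 1)) = 0 := by
      intro j _
      rw [min_eq_left]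
      · rw [← hx0]; ring
      · rw [← hx0]; simp; positivity
    rw [Finset.sum_congr rfl hz, Finset.sum_const, smul_zero, ← hx0]
    rw [mul_zero, zero_div]
  · -- x > 0
    have hex : ∃ k : ℕ, η ^ (k + 1) * x ≤ K := by
      obtain ⟨n, hn⟩ := exists_pow_lt_of_lt_one (div_pos hK hx0) h1
      refine ⟨n, ?_⟩
      have h2 : η ^ (n + 1) ≤ η ^ n := pow_le_pow_of_le_one h0.le h1.le (Nat.le_succ n)
      have := (lt_div_iff₀ hx0).mp (lt_of_le_of_lt h2 hn)
      linarith
    classical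
    set k0 := Nat.find hex with hk0def
    have hP : η ^ (k0 + 1) * x ≤ K := Nat.find_spec hex
    have hmin : ∀ j < k0, K < η ^ (j + 1) * x := by
      intro j hj
      have := Nat.find_min hex hj
      linarith [not_le.mp this]
    have hstep : ∀ j ∈ Finset.range N,
        min (η ^ (j + 1) * x ^ 2) (K ^ 2 / η ^ (j + 1)) ≤
          (if j < k0 then K ^ 2 / η ^ (j + 1) else 0) +
          (if k0 ≤ j then η ^ (j + 1) * x ^ 2 else 0) := by
      intro j _
      by_cases hj : j < k0
      · simp [hj, not_le.mpr hj, min_le_right]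
      · simp [hj, not_lt.mp hj, min_le_left]
    refine le_trans (Finset.sum_le_sum hstep) ?_
    rw [Finset.sum_add_distrib]
    have hS1 : ∑ j ∈ Finset.range N, (if j < k0 then K ^ 2 / η ^ (j + 1) else 0) ≤
        K * x / (1 - η) := by
      rw [← Finset.sum_filter]
      have hsub : (Finset.range N).filter (· < k0) ⊆ Finset.range k0 := by
        intro j hj
        simp only [Finset.mem_filter, Finset.mem_range] at hj ⊢
        exact hj.2
      have h2 : ∑ j ∈ (Finset.range N).filter (· < k0), K ^ 2 / η ^ (j + 1) ≤
          ∑ j ∈ Finset.range k0, K ^ 2 / η ^ (j + 1) := by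
        apply Finset.sum_le_sum_of_subset_of_nonneg hsub
        intro j _ _; positivity
      refine le_trans h2 ?_
      match k0 with
      | 0 => simp; positivity
      | Nat.succ n =>
        have hx1 : K < η ^ (n + 1) * x := hmin n (Nat.lt_succ_self n)
        have h3 : ∑ j ∈ Finset.range (n + 1), K ^ 2 / η ^ (j + 1) =
            K ^ 2 * ∑ j ∈ Finset.range (n + 1), 1 / η ^ (j + 1) := by
          rw [Finset.mul_sum]; congr 1; ext j; ring
        rw [h3]
        have h4 := geom_inv_aux h0 h1 (n + 1)
        have h5 : K ^ 2 * ((1 / η ^ (n + 1)) / (1 - η)) ≤ K * x / (1 - η) := by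
          have hpp : (0:ℝ) < η ^ (n + 1) := by positivity
          have h6 : K ^ 2 * (1 / η ^ (n + 1)) ≤ K * x := by
            rw [mul_one_div, div_le_iff₀ hpp]
            nlinarith
          have heq : K ^ 2 * ((1 / η ^ (n + 1)) / (1 - η)) =
              (K ^ 2 * (1 / η ^ (n + 1))) / (1 - η) := by ring
          rw [heq]
          exact (div_le_div_iff_of_pos_right h1η).mpr h6
        calc K ^ 2 * ∑ j ∈ Finset.range (n + 1), 1 / η ^ (j + 1)
            ≤ K ^ 2 * ((1 / η ^ (n + 1)) / (1 - η)) := by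
              apply mul_le_mul_of_nonneg_left h4 (by positivity)
          _ ≤ K * x / (1 - η) := h5
    have hS2 : ∑ j ∈ Finset.range N, (if k0 ≤ j then η ^ (j + 1) * x ^ 2 else 0) ≤
        K * x / (1 - η) := by
      rw [← Finset.sum_filter]
      have hsub : (Finset.range N).filter (k0 ≤ ·) ⊆ Finset.Ico k0 (k0 + N) := by
        intro j hj
        simp only [Finset.mem_filter, Finset.mem_range, Finset.mem_Ico] at hj ⊢
        exact ⟨hj.2, lt_of_lt_of_le hj.1 (Nat.le_add_left N k0)⟩
      have h2 : ∑ j ∈ (Finset.range N).filter (k0 ≤ ·), η ^ (j + 1) * x ^ 2 ≤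
          ∑ j ∈ Finset.Ico k0 (k0 + N), η ^ (j + 1) * x ^ 2 := by
        apply Finset.sum_le_sum_of_subset_of_nonneg hsub
        intro j _ _; positivity
      refine le_trans h2 ?_
      rw [Finset.sum_Ico_eq_sum_range]
      simp only [Nat.add_sub_cancel_left]
      have h3 : ∑ i ∈ Finset.range N, η ^ (k0 + i + 1) * x ^ 2 =
          (∑ i ∈ Finset.range N, η ^ ((k0 + 1) + i)) * x ^ 2 := by
        rw [Finset.sum_mul]; congr 1; ext i; ring_nf
      rw [h3]
      have h4 := geom_aux h0 h1 N (k0 + 1)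
      have h5 : (∑ i ∈ Finset.range N, η ^ ((k0 + 1) + i)) * x ^ 2 ≤
          (η ^ (k0 + 1) / (1 - η)) * x ^ 2 := by
        apply mul_le_mul_of_nonneg_right h4 (by positivity)
      refine le_trans h5 ?_
      rw [div_mul_eq_mul_div]
      refine (div_le_div_iff_of_pos_right h1η).mpr ?_
      nlinarith [mul_le_mul_of_nonneg_right hP hx]
    calc _ ≤ K * x / (1 - η) + K * x / (1 - η) := add_le_add hS1 hS2
      _ = 2 * K * x / (1 - η) := by ring

open MeasureTheory

/-- Effect of truncation on the variance of a CTBP: with `m_j = K η^{-j}`,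
`a_j = η E[(X ∧ m_j)²]/ν`, `b_j = η E[X ∧ m_j]/ν` and `ν = E[X] ≥ 1`,
`∑_{j≥1} b_1 ⋯ b_{j-1} a_j ≤ 2νK/(1-η)`. -/
theorem truncation_variance_bound {Ω : Type*} [MeasurableSpace Ω] (ℙ : Measure Ω)
    [IsProbabilityMeasure ℙ] (X : Ω → ℕ) (hX : Measurable X)
    (hInt : Integrable (fun ω => (X ω : ℝ)) ℙ)
    (η K : ℝ) (hη : η ∈ Set.Ioo (0:ℝ) 1) (hK : 1 ≤ K)
    (ν : ℝ) (hν : ν = ∫ ω, (X ω : ℝ) ∂ℙ) (hν1 : 1 ≤ ν)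
    (a b : ℕ → ℝ)
    (ha : ∀ j : ℕ, a j = η * (∫ ω, (min (X ω : ℝ) (K / η ^ (j + 1))) ^ 2 ∂ℙ) / ν)
    (hb : ∀ j : ℕ, b j = η * (∫ ω, min (X ω : ℝ) (K / η ^ (j + 1)) ∂ℙ) / ν) :
    ∑' j : ℕ, (∏ i ∈ Finset.range j, b i) * a j ≤ 2 * ν * K / (1 - η) := by
  obtain ⟨hη0, hη1⟩ := hη
  have hK0 : (0:ℝ) < K := lt_of_lt_of_le one_pos hK
  have hν0 : (0:ℝ) < ν := lt_of_lt_of_le one_pos hν1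
  have h1η : (0:ℝ) < 1 - η := by linarith
  have hXr : Measurable (fun ω => (X ω : ℝ)) :=
    (measurable_from_top (f := (Nat.cast : ℕ → ℝ))).comp hX
  have hXnn : ∀ ω, (0:ℝ) ≤ (X ω : ℝ) := fun ω => Nat.cast_nonneg _
  have hm : ∀ j : ℕ, (0:ℝ) < K / η ^ (j + 1) := by intro j; positivity
  -- integrability of the truncated variables
  have int_min : ∀ j : ℕ, Integrable (fun ω => min (X ω : ℝ) (K / η ^ (j + 1))) ℙ := by
    intro j
    refine Integrable.mono' (integrable_const (K / η ^ (j + 1)))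
      (hXr.min measurable_const).aestronglyMeasurable ?_
    filter_upwards with ω
    rw [Real.norm_eq_abs, abs_of_nonneg (le_min (hXnn ω) (hm j).le)]
    exact min_le_right _ _
  have int_sq : ∀ j : ℕ,
      Integrable (fun ω => (min (X ω : ℝ) (K / η ^ (j + 1))) ^ 2) ℙ := by
    intro j
    refine Integrable.mono' (integrable_const ((K / η ^ (j + 1)) ^ 2))
      ((hXr.min measurable_const).pow_const 2).aestronglyMeasurable ?_
    filter_upwards with ω
    rw [Real.norm_eq_abs, abs_of_nonneg (by positivity)]
    exact pow_le_pow_left₀ (le_min (hXnn ω) (hm j).le) (min_le_right _ _) 2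
  have int_g : ∀ j : ℕ,
      Integrable (fun ω => min (η ^ (j + 1) * (X ω : ℝ) ^ 2) (K ^ 2 / η ^ (j + 1))) ℙ := by
    intro j
    refine Integrable.mono' (integrable_const (K ^ 2 / η ^ (j + 1)))
      ((measurable_const.mul (hXr.pow_const 2)).min measurable_const).aestronglyMeasurable ?_
    filter_upwards with ω
    rw [Real.norm_eq_abs, abs_of_nonneg (le_min (by positivity) (by positivity))]
    exact min_le_right _ _
  -- nonnegativity and basic bounds
  have hmin_nonneg : ∀ j : ℕ, (0:ℝ) ≤ ∫ ω, min (X ω : ℝ) (K / η ^ (j + 1)) ∂ℙ := by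
    intro j
    exact integral_nonneg fun ω => le_min (hXnn ω) (hm j).le
  have hsq_nonneg : ∀ j : ℕ,
      (0:ℝ) ≤ ∫ ω, (min (X ω : ℝ) (K / η ^ (j + 1))) ^ 2 ∂ℙ := by
    intro j; exact integral_nonneg fun ω => sq_nonneg _
  have hb_nonneg : ∀ j : ℕ, 0 ≤ b j := by
    intro j; rw [hb j]
    exact div_nonneg (mul_nonneg hη0.le (hmin_nonneg j)) hν0.le
  have ha_nonneg : ∀ j : ℕ, 0 ≤ a j := by
    intro j; rw [ha j]
    exact div_nonneg (mul_nonneg hη0.le (hsq_nonneg j)) hν0.le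
  have hb_le : ∀ j : ℕ, b j ≤ η := by
    intro j
    rw [hb j]
    have hIle : ∫ ω, min (X ω : ℝ) (K / η ^ (j + 1)) ∂ℙ ≤ ν := by
      rw [hν]
      exact integral_mono (int_min j) hInt fun ω => min_le_left _ _
    rw [div_le_iff₀ hν0]
    nlinarith
  have hprod : ∀ j : ℕ, ∏ i ∈ Finset.range j, b i ≤ η ^ j := by
    intro j
    calc ∏ i ∈ Finset.range j, b i ≤ ∏ _i ∈ Finset.range j, η :=
          Finset.prod_le_prod (fun i _ => hb_nonneg i) (fun i _ => hb_le i)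
      _ = η ^ j := by rw [Finset.prod_const, Finset.card_range]
  have hprod_nonneg : ∀ j : ℕ, 0 ≤ ∏ i ∈ Finset.range j, b i := by
    intro j; exact Finset.prod_nonneg fun i _ => hb_nonneg i
  have ha_le : ∀ j : ℕ, a j ≤ η * ∫ ω, (min (X ω : ℝ) (K / η ^ (j + 1))) ^ 2 ∂ℙ := by
    intro j
    rw [ha j]
    exact div_le_self (mul_nonneg hη0.le (hsq_nonneg j)) hν1
  -- termwise bound by an integral
  have hterm : ∀ j : ℕ, (∏ i ∈ Finset.range j, b i) * a j ≤
      ∫ ω, min (η ^ (j + 1) * (X ω : ℝ) ^ 2) (K ^ 2 / η ^ (j + 1)) ∂ℙ := by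
    intro j
    have h1 : (∏ i ∈ Finset.range j, b i) * a j ≤
        η ^ j * (η * ∫ ω, (min (X ω : ℝ) (K / η ^ (j + 1))) ^ 2 ∂ℙ) := by
      calc (∏ i ∈ Finset.range j, b i) * a j ≤ η ^ j * a j :=
            mul_le_mul_of_nonneg_right (hprod j) (ha_nonneg j)
        _ ≤ η ^ j * (η * ∫ ω, (min (X ω : ℝ) (K / η ^ (j + 1))) ^ 2 ∂ℙ) :=
            mul_le_mul_of_nonneg_left (ha_le j) (by positivity)
    have h2 : η ^ j * (η * ∫ ω, (min (X ω : ℝ) (K / η ^ (j + 1))) ^ 2 ∂ℙ) =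
        ∫ ω, η ^ (j + 1) * (min (X ω : ℝ) (K / η ^ (j + 1))) ^ 2 ∂ℙ := by
      rw [integral_const_mul]
      ring
    have h3 : ∫ ω, η ^ (j + 1) * (min (X ω : ℝ) (K / η ^ (j + 1))) ^ 2 ∂ℙ ≤
        ∫ ω, min (η ^ (j + 1) * (X ω : ℝ) ^ 2) (K ^ 2 / η ^ (j + 1)) ∂ℙ := by
      refine integral_mono ((int_sq j).const_mul _) (int_g j) fun ω => ?_
      have hmn : (0:ℝ) ≤ min (X ω : ℝ) (K / η ^ (j + 1)) := le_min (hXnn ω) (hm j).le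
      refine le_min ?_ ?_
      · exact mul_le_mul_of_nonneg_left
          (pow_le_pow_left₀ hmn (min_le_left _ _) 2) (by positivity)
      · have := mul_le_mul_of_nonneg_left
          (pow_le_pow_left₀ hmn (min_le_right _ _) 2) (le_of_lt (by positivity : (0:ℝ) < η ^ (j + 1)))
        calc η ^ (j + 1) * (min (X ω : ℝ) (K / η ^ (j + 1))) ^ 2
            ≤ η ^ (j + 1) * (K / η ^ (j + 1)) ^ 2 := this
          _ = K ^ 2 / η ^ (j + 1) := by field_simp
    linarith
  -- partial sums are bounded
  have hpartial : ∀ n : ℕ,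
      ∑ j ∈ Finset.range n, (∏ i ∈ Finset.range j, b i) * a j ≤ 2 * ν * K / (1 - η) := by
    intro n
    have h1 : ∑ j ∈ Finset.range n, (∏ i ∈ Finset.range j, b i) * a j ≤
        ∑ j ∈ Finset.range n,
          ∫ ω, min (η ^ (j + 1) * (X ω : ℝ) ^ 2) (K ^ 2 / η ^ (j + 1)) ∂ℙ :=
      Finset.sum_le_sum fun j _ => hterm j
    have h2 : ∑ j ∈ Finset.range n,
          ∫ ω, min (η ^ (j + 1) * (X ω : ℝ) ^ 2) (K ^ 2 / η ^ (j + 1)) ∂ℙ =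
        ∫ ω, ∑ j ∈ Finset.range n,
          min (η ^ (j + 1) * (X ω : ℝ) ^ 2) (K ^ 2 / η ^ (j + 1)) ∂ℙ :=
      (integral_finset_sum (Finset.range n) fun j _ => int_g j).symm
    have h3 : ∫ ω, ∑ j ∈ Finset.range n,
          min (η ^ (j + 1) * (X ω : ℝ) ^ 2) (K ^ 2 / η ^ (j + 1)) ∂ℙ ≤
        ∫ ω, 2 * K * (X ω : ℝ) / (1 - η) ∂ℙ := by
      refine integral_mono (integrable_finset_sum _ fun j _ => int_g j)
        ((hInt.const_mul (2 * K)).div_const (1 - η)) fun ω => ?_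
      exact pointwise_sum hη0 hη1 hK0 (hXnn ω) n
    have h4 : ∫ ω, 2 * K * (X ω : ℝ) / (1 - η) ∂ℙ = 2 * ν * K / (1 - η) := by
      rw [integral_div, integral_const_mul, ← hν]
      ring
    linarith
  exact Real.tsum_le_of_sum_range_le (fun j => mul_nonneg (hprod_nonneg j) (ha_nonneg j)) hpartial
end

section
/- Let (d_i)_{i∈[n]} be a degree sequence and D_n the degree of a uniformly chosen vertex. If the uniform X² log X condition holds—i.e., for every sequence K_n → ∞, limsup_n E[D_n² log(D_n/K_n)_+] = 0—then the maximal degree Δ_n = max_i d_i satisfies Δ_n = o(√(n/log n)). Concretely: if for some ε > 0 and infinitely many n one has Δ_n ≥ ε√(n/log n), then with K_n = n^{1/4}, E[D_n² log(D_n/K_n)_+] ≥ ε²/8 for all large such n. -/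
open Filter Real

lemma aux_eventually (ε : ℝ) (hε : 0 < ε) :
    ∀ᶠ n : ℕ in atTop, 1 ≤ Real.log n ∧ Real.log (Real.log n) ≤ (1/8) * Real.log n ∧
      16 * |Real.log ε| ≤ Real.log n := by
  have hlog : Tendsto (fun n : ℕ => Real.log n) atTop atTop :=
    Real.tendsto_log_atTop.comp tendsto_natCast_atTop_atTop
  have h1 : ∀ᶠ n : ℕ in atTop, 1 ≤ Real.log n := hlog.eventually_ge_atTop 1
  have h3 : ∀ᶠ n : ℕ in atTop, 16 * |Real.log ε| ≤ Real.log n :=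
    hlog.eventually_ge_atTop _
  have hlo : (fun x : ℝ => Real.log (Real.log x)) =o[atTop] fun x => Real.log x := by
    exact Real.isLittleO_log_id_atTop.comp_tendsto Real.tendsto_log_atTop
  have h2' : ∀ᶠ x : ℝ in atTop, ‖Real.log (Real.log x)‖ ≤ (1/8) * ‖Real.log x‖ :=
    hlo.bound (by norm_num)
  have h2 : ∀ᶠ n : ℕ in atTop, Real.log (Real.log n) ≤ (1/8) * Real.log n := by
    filter_upwards [tendsto_natCast_atTop_atTop.eventually h2',
      h1] with n hn h1n
    calc Real.log (Real.log n) ≤ ‖Real.log (Real.log n)‖ := le_abs_self _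
      _ ≤ (1/8) * ‖Real.log n‖ := hn
      _ = (1/8) * Real.log n := by rw [Real.norm_eq_abs, abs_of_nonneg (by linarith)]
  filter_upwards [h1, h2, h3] with n a b c using ⟨a, b, c⟩

/-- Uniform `X² log X` control fails for large maximal degree: for every `ε > 0` there is `N`
such that for all `n ≥ N` and every degree sequence `d` on `[n]` with maximal degree at least
`ε √(n/log n)`, one has `E[D_n² log(D_n/n^{1/4})_+] ≥ ε²/8`. -/
theorem max_degree_little_o (ε : ℝ) (hε : 0 < ε) :
    ∃ N : ℕ, ∀ n : ℕ, N ≤ n → ∀ d : Fin n → ℕ,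
      (∃ i, ε * Real.sqrt ((n : ℝ) / Real.log n) ≤ (d i : ℝ)) →
      ε ^ 2 / 8 ≤ (1 / (n : ℝ)) *
        ∑ i, (d i : ℝ) ^ 2 * max (Real.log ((d i : ℝ) / (n : ℝ) ^ ((1:ℝ)/4))) 0 := by
  obtain ⟨N, hN⟩ := eventually_atTop.mp (aux_eventually ε hε)
  refine ⟨N, fun n hn d ⟨i, hi⟩ => ?_⟩
  obtain ⟨hl1, hl2, hl3⟩ := hN n hn
  have hlpos : 0 < Real.log n := by linarith
  have hnpos : (0:ℝ) < n := by
    by_contra h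
    push_neg at h
    have : Real.log n ≤ 0 := Real.log_nonpos (Nat.cast_nonneg n) (by linarith)
    linarith
  have hratio : (0:ℝ) < (n:ℝ) / Real.log n := div_pos hnpos hlpos
  set a : ℝ := ε * Real.sqrt ((n : ℝ) / Real.log n) with ha
  have hapos : 0 < a := mul_pos hε (Real.sqrt_pos.mpr hratio)
  have ha2 : a ^ 2 = ε ^ 2 * ((n:ℝ) / Real.log n) := by
    rw [ha, mul_pow, Real.sq_sqrt hratio.le]
  -- lower bound on the log
  set L : ℝ := Real.log (a / (n:ℝ) ^ ((1:ℝ)/4)) with hL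
  have hLval : L = Real.log ε + (1/2) * (Real.log n - Real.log (Real.log n))
      - (1/4) * Real.log n := by
    rw [hL, Real.log_div hapos.ne' (Real.rpow_pos_of_pos hnpos _).ne',
      Real.log_rpow hnpos, ha, Real.log_mul hε.ne' (Real.sqrt_pos.mpr hratio).ne',
      Real.log_sqrt hratio.le, Real.log_div hnpos.ne' hlpos.ne']
    ring
  have hεlog : -((1/16) * Real.log n) ≤ Real.log ε := by
    have := neg_abs_le (Real.log ε)
    nlinarith [abs_nonneg (Real.log ε)]
  have hLge : (1/8) * Real.log n ≤ L := by
    rw [hLval]; nlinarith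
  have hLpos : 0 < L := lt_of_lt_of_le (by positivity) hLge
  -- term at i
  have hterm : a ^ 2 * L ≤ (d i : ℝ) ^ 2 * max (Real.log ((d i : ℝ) / (n : ℝ) ^ ((1:ℝ)/4))) 0 := by
    have hdi : a ≤ (d i : ℝ) := hi
    have hlog_le : L ≤ Real.log ((d i : ℝ) / (n : ℝ) ^ ((1:ℝ)/4)) := by
      apply Real.log_le_log (by positivity)
      gcongr
    have : L ≤ max (Real.log ((d i : ℝ) / (n : ℝ) ^ ((1:ℝ)/4))) 0 :=
      hlog_le.trans (le_max_left _ _)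
    have hsq : a ^ 2 ≤ (d i : ℝ) ^ 2 := by nlinarith
    exact mul_le_mul hsq this hLpos.le (by positivity)
  have hsum : a ^ 2 * L ≤ ∑ j, (d j : ℝ) ^ 2 * max (Real.log ((d j : ℝ) / (n : ℝ) ^ ((1:ℝ)/4))) 0 := by
    refine hterm.trans (Finset.single_le_sum (f := fun j => (d j : ℝ) ^ 2 * max (Real.log ((d j : ℝ) / (n : ℝ) ^ ((1:ℝ)/4))) 0) (fun j _ => ?_) (Finset.mem_univ i))
    positivity
  have key : ε ^ 2 / 8 ≤ (1 / (n:ℝ)) * (a ^ 2 * L) := by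
    rw [ha2]
    have heq : (1 / (n:ℝ)) * (ε ^ 2 * ((n:ℝ) / Real.log n) * L) = ε ^ 2 * L / Real.log n := by
      field_simp
    rw [heq, div_le_div_iff₀ (by norm_num : (0:ℝ) < 8) hlpos]
    nlinarith [sq_nonneg ε]
  refine key.trans ?_
  have h1n : (0:ℝ) ≤ 1 / (n:ℝ) := by positivity
  exact mul_le_mul_of_nonneg_left hsum h1n
end
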